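/- arXiv:0803.0852 — 3 statements merged into one kernel-verified Lean document; each statement's English description precedes it below -/
import Mathlib

section
/- For every natural number k, the prefix of length 2^k of the Thue–Morse word (i.e., the iterate of order k of the L-system) is a primitive word: it is not equal to w^m for any word w and any integer m ≥ 2. -/
open Fin.NatCast in
/-- The Thue–Morse sequence: `t n` is the parity of the number of `1` digits
in the binary expansion of `n` (so `t 0 = 0`, `t (2n) = t n`, `t (2n+1) = 1 - t n`). -/
def thueMorse (n : ℕ) : Fin 2 := ((Nat.digits 2 n).sum : Fin 2)

lemma tm_zero : thueMorse 0 = 0 := by simp [thueMorse]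

lemma tm_two_mul (n : ℕ) (hn : n ≠ 0) : thueMorse (2 * n) = thueMorse n := by
  unfold thueMorse
  rw [Nat.digits_def' (by norm_num : 1 < 2) (by positivity)]
  simp

lemma tm_pow (j : ℕ) : thueMorse (2 ^ j) = 1 := by
  induction j with
  | zero =>
    unfold thueMorse
    rw [pow_zero, Nat.digits_def' (by norm_num : 1 < 2) Nat.one_pos]
    simp
  | succ j ih =>
    rw [pow_succ, mul_comm, tm_two_mul _ (by positivity)]
    exact ih

/-- For every `k`, the prefix of length `2^k` of the Thue–Morse word (the
iterate of order `k` of the L-system) is a primitive word: it is not equal to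
`w^m` (the `m`-fold concatenation of `w`) for any word `w` and any `m ≥ 2`. -/
theorem thueMorse_prefix_primitive (k : ℕ) (w : List (Fin 2)) (m : ℕ) (hm : 2 ≤ m) :
    (List.ofFn fun i : Fin (2 ^ k) => thueMorse i) ≠ (List.replicate m w).flatten := by
  intro h
  have hlen : 2 ^ k = m * w.length := by
    have := congrArg List.length h
    simpa using this
  have hw : 0 < w.length := by
    rcases Nat.eq_zero_or_pos w.length with h0 | h0
    · rw [h0, mul_zero] at hlen
      exact absurd hlen (by positivity)
    · exact h0
  have hdvd : w.length ∣ 2 ^ k := ⟨m, by rw [hlen, mul_comm]⟩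
  obtain ⟨j, hj, hjw⟩ := (Nat.dvd_prime_pow Nat.prime_two).1 hdvd
  have hlt : w.length < 2 ^ k := by
    calc w.length < 2 * w.length := by omega
    _ ≤ m * w.length := Nat.mul_le_mul_right _ hm
    _ = 2 ^ k := hlen.symm
  obtain ⟨m', rfl⟩ : ∃ m', m = m' + 2 := ⟨m - 2, by omega⟩
  rw [List.replicate_succ, List.replicate_succ, List.flatten_cons, List.flatten_cons] at h
  have h0 := congrArg (fun l => l[0]?) h
  have h1 := congrArg (fun l => l[w.length]?) h
  simp only [List.getElem?_ofFn] at h0 h1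
  rw [List.getElem?_append_left hw] at h0
  rw [List.getElem?_append_right (le_refl _), Nat.sub_self,
    List.getElem?_append_left hw] at h1
  have hpos : 0 < 2 ^ k := by positivity
  simp only [List.ofFnNthVal, dif_pos hpos, dif_pos hlt] at h0 h1
  have : thueMorse 0 = thueMorse w.length := by
    have := h0.trans h1.symm
    simpa using this
  rw [tm_zero, hjw, tm_pow] at this
  exact absurd this (by decide)
end

section
/- For every finite contiguous block S of the Thue–Morse word, the numbers of A's and of B's in S differ by at most 2: for all natural numbers a and n, |#{i : a ≤ i < a + n and t(i) = 0} − #{i : a ≤ i < a + n and t(i) = 1}| ≤ 2. -/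
lemma thueMorse_two_mul (k : ℕ) : thueMorse (2 * k) = thueMorse k := by
  rcases Nat.eq_zero_or_pos k with rfl | hk
  · rfl
  · unfold thueMorse
    rw [Nat.digits_def' (by norm_num : 1 < 2) (by omega)]
    simp [Nat.mul_div_cancel_left, Nat.mul_mod_right]

open Fin.NatCast in
lemma thueMorse_two_mul_add_one (k : ℕ) :
    thueMorse (2 * k + 1) = 1 + thueMorse k := by
  unfold thueMorse
  rw [Nat.digits_def' (by norm_num : 1 < 2) (by omega)]
  have h1 : (2 * k + 1) % 2 = 1 := by omega
  have h2 : (2 * k + 1) / 2 = k := by omega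
  rw [h1, h2, List.sum_cons]
  push_cast
  ring

noncomputable def e (i : ℕ) : ℤ := if thueMorse i = 0 then 1 else -1

lemma e_pair (k : ℕ) : e (2 * k) + e (2 * k + 1) = 0 := by
  unfold e
  rw [thueMorse_two_mul, thueMorse_two_mul_add_one]
  rcases (by decide : ∀ x : Fin 2, x = 0 ∨ x = 1) (thueMorse k) with h | h <;>
    rw [h] <;> decide

lemma sum_e_even (m : ℕ) : ∑ i ∈ Finset.range (2 * m), e i = 0 := by
  induction m with
  | zero => simp
  | succ m ih =>
      have : 2 * (m + 1) = (2 * m + 1) + 1 := by ring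
      rw [this, Finset.sum_range_succ, Finset.sum_range_succ, ih]
      have := e_pair m
      omega

lemma abs_sum_e (n : ℕ) : |∑ i ∈ Finset.range n, e i| ≤ 1 := by
  rcases Nat.even_or_odd n with ⟨m, hm⟩ | ⟨m, hm⟩
  · rw [hm, show m + m = 2 * m by ring, sum_e_even]; norm_num
  · rw [hm, Finset.sum_range_succ, sum_e_even]
    unfold e
    split <;> norm_num

lemma sum_e_eq (s : Finset ℕ) :
    ∑ i ∈ s, e i = ((s.filter fun i => thueMorse i = 0).card : ℤ) -
      ((s.filter fun i => thueMorse i = 1).card : ℤ) := by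
  have h : (s.filter fun i => thueMorse i = 1) = s.filter fun i => ¬ thueMorse i = 0 := by
    apply Finset.filter_congr
    intro i _
    constructor
    · intro h; rw [h]; decide
    · intro h
      rcases (by decide : ∀ x : Fin 2, x = 0 ∨ x = 1) (thueMorse i) with h' | h' <;> simp_all
  rw [h, ← Finset.sum_boole, ← Finset.sum_boole, ← Finset.sum_sub_distrib]
  apply Finset.sum_congr rfl
  intro i _
  unfold e
  split <;> simp_all

/-- In any finite contiguous block of the Thue–Morse word, the numbers of `A`'s
(`t i = 0`) and of `B`'s (`t i = 1`) differ by at most `2`. -/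
theorem thueMorse_block_discrepancy_le_two (a n : ℕ) :
    |((((Finset.Ico a (a + n)).filter fun i => thueMorse i = 0).card : ℤ) -
        (((Finset.Ico a (a + n)).filter fun i => thueMorse i = 1).card : ℤ))| ≤ 2 := by
  rw [← sum_e_eq]
  rw [Finset.sum_Ico_eq_sub _ (by omega : a ≤ a + n)]
  have h1 := abs_sum_e (a + n)
  have h2 := abs_sum_e a
  calc |_| ≤ |∑ i ∈ Finset.range (a+n), e i| + |∑ i ∈ Finset.range a, e i| := abs_sub _ _
    _ ≤ 2 := by omega
end

section
/- For every finite contiguous block S of the Thue–Morse word of odd length, the numbers of A's and of B's in S differ by exactly 1: for all natural numbers a and n with n odd, |#{i : a ≤ i < a + n and t(i) = 0} − #{i : a ≤ i < a + n and t(i) = 1}| = 1. -/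
private def tmSign (i : ℕ) : ℤ := if thueMorse i = 0 then 1 else -1

private lemma fin2_cases : ∀ x : Fin 2, x = 0 ∨ x = 1 := by decide

private lemma tm_odd (j : ℕ) : thueMorse (2 * j + 1) = thueMorse (2 * j) + 1 := by
  unfold thueMorse
  have h1 : Nat.digits 2 (2 * j + 1) = 1 :: Nat.digits 2 j := by
    rw [Nat.digits_def' (by norm_num) (by omega)]
    congr 1
    · omega
    · congr 1; omega
  rcases Nat.eq_zero_or_pos j with h | h
  · subst h; simp [h1]
  · have h2 : Nat.digits 2 (2 * j) = 0 :: Nat.digits 2 j := by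
      rw [Nat.digits_def' (by norm_num) (by omega)]
      congr 1
      · omega
      · congr 1; omega
    rw [h1, h2]
    push_cast [List.sum_cons]
    rw [zero_add]
    open Fin.NatCast in exact (Nat.cast_add (R := Fin 2) _ _).trans (by rw [Nat.cast_one, add_comm])

private lemma tmSign_pair (j : ℕ) : tmSign (2 * j) + tmSign (2 * j + 1) = 0 := by
  unfold tmSign
  rcases fin2_cases (thueMorse (2 * j)) with h | h <;>
    rw [tm_odd, h] <;> norm_num <;> decide

private lemma abs_tmSign (i : ℕ) : |tmSign i| = 1 := by
  unfold tmSign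
  split <;> norm_num

private lemma even_sum (m k : ℕ) :
    ∑ i ∈ Finset.Ico (2 * k) (2 * k + 2 * m), tmSign i = 0 := by
  induction m with
  | zero => simp
  | succ m ih =>
    have h1 : 2 * k + 2 * (m + 1) = (2 * k + 2 * m + 1) + 1 := by ring
    have h2 : 2 * k + 2 * m + 1 = (2 * k + 2 * m) + 1 := by ring
    rw [h1, Finset.sum_Ico_succ_top (by omega), h2,
      Finset.sum_Ico_succ_top (by omega), ih]
    have : 2 * k + 2 * m = 2 * (k + m) := by ring
    rw [this, zero_add]
    exact tmSign_pair (k + m)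

private lemma odd_sum (a n : ℕ) (hn : Odd n) :
    |∑ i ∈ Finset.Ico a (a + n), tmSign i| = 1 := by
  obtain ⟨m, rfl⟩ := hn
  rcases Nat.even_or_odd a with ⟨k, hk⟩ | ⟨k, hk⟩
  · have hk' : a = 2 * k := by omega
    subst hk'
    have h1 : 2 * k + (2 * m + 1) = (2 * k + 2 * m) + 1 := by ring
    rw [h1, Finset.sum_Ico_succ_top (by omega), even_sum, zero_add]
    exact abs_tmSign _
  · subst hk
    have he : 2 * k + 1 + (2 * m + 1) = 2 * (k + 1) + 2 * m := by omega
    rw [he, ← Finset.sum_Ico_consecutive _ (by omega : 2 * k + 1 ≤ 2 * (k + 1)) (by omega),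
      even_sum, add_zero]
    have h2 : 2 * (k + 1) = (2 * k + 1) + 1 := by ring
    rw [h2, Nat.Ico_succ_singleton, Finset.sum_singleton]
    exact abs_tmSign _

/-- In any finite contiguous block of odd length of the Thue–Morse word, the
numbers of `A`'s (`t i = 0`) and of `B`'s (`t i = 1`) differ by exactly `1`. -/
theorem thueMorse_odd_block_discrepancy_eq_one (a n : ℕ) (hn : Odd n) :
    |((((Finset.Ico a (a + n)).filter fun i => thueMorse i = 0).card : ℤ) -
        (((Finset.Ico a (a + n)).filter fun i => thueMorse i = 1).card : ℤ))| = 1 := by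
  have key : ((((Finset.Ico a (a + n)).filter fun i => thueMorse i = 0).card : ℤ) -
      (((Finset.Ico a (a + n)).filter fun i => thueMorse i = 1).card : ℤ)) =
      ∑ i ∈ Finset.Ico a (a + n), tmSign i := by
    have hfilter : ((Finset.Ico a (a + n)).filter fun i => thueMorse i = 1) =
        (Finset.Ico a (a + n)).filter fun i => ¬ thueMorse i = 0 := by
      apply Finset.filter_congr
      intro i _
      rcases fin2_cases (thueMorse i) with h | h <;> simp [h]
    rw [hfilter]
    unfold tmSign
    rw [Finset.sum_ite, Finset.sum_const, Finset.sum_const]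
    push_cast
    ring
  rw [key]
  exact odd_sum a n hn
end
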